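/- Let d = 2 with the two-station tandem-queue data for parameters β_0, β_1, β_2 > 0 and c_0, c_1, c_2 > 0. Define α = -2 diag(Σ)⁻¹ diag(R) R⁻¹ μ and, with Q = R⁻¹ and Δ_i = -2⟨μ, v^{(i)}⟩/⟨v^{(i)}, Σ v^{(i)}⟩ where v^{(i)} is the i-th column of Qᵀ, define λ_i = Δ_i Q_{ii}. Then α_1 = λ_1 = 2(β_1 - β_0)/(β_0(c_0² + c_1²)), α_2 = 2(β_2 - β_0)/(β_0(c_1² + c_2²)), and λ_2 = 2(β_2 - β_0)/(β_0(c_0² + c_2²)). In particular, if β_0 < β_2, then α_2 = λ_2 if and only if c_0 = c_1. -/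

import Mathlib

open Matrix

/-- For the two-station tandem queue with parameters
`β_0, β_1, β_2 > 0` and `c_0, c_1, c_2 > 0`, with
`α = -2 diag(Σ)⁻¹ diag(R) R⁻¹ μ` and `λ_i = Δ_i Q_{ii}` (where `Q = R⁻¹`), one has
`α_1 = λ_1 = 2(β_1-β_0)/(β_0(c_0²+c_1²))`, `α_2 = 2(β_2-β_0)/(β_0(c_1²+c_2²))` and
`λ_2 = 2(β_2-β_0)/(β_0(c_0²+c_2²))`; in particular if `β_0 < β_2` then
`α_2 = λ_2 ↔ c_0 = c_1`. (Coordinates are 0-based: index `0` is station 1.) -/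
theorem statement11 (β0 β1 β2 c0 c1 c2 : ℝ)
    (hβ0 : 0 < β0) (hβ1 : 0 < β1) (hβ2 : 0 < β2)
    (hc0 : 0 < c0) (hc1 : 0 < c1) (hc2 : 0 < c2)
    (R : Matrix (Fin 2) (Fin 2) ℝ) (hR : R = !![1, 0; -1, 1])
    (S : Matrix (Fin 2) (Fin 2) ℝ)
    (hS : S = !![β0 * (c0 ^ 2 + c1 ^ 2), -(β0 * c1 ^ 2);
                 -(β0 * c1 ^ 2), β0 * (c1 ^ 2 + c2 ^ 2)])
    (μ : Fin 2 → ℝ) (hμ : μ = ![β0 - β1, β1 - β2])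
    (Q : Matrix (Fin 2) (Fin 2) ℝ) (hQ : Q = R⁻¹)
    (α : Fin 2 → ℝ)
    (hα : α = (-2 : ℝ) •
      (((Matrix.diagonal fun i => S i i)⁻¹ * (Matrix.diagonal fun i => R i i) * R⁻¹) *ᵥ μ))
    (v : Fin 2 → Fin 2 → ℝ) (hv : ∀ i j, v i j = Q i j)
    (Δ : Fin 2 → ℝ)
    (hΔ : ∀ i, Δ i = -2 * (μ ⬝ᵥ v i) / (v i ⬝ᵥ S.mulVec (v i)))
    (lam : Fin 2 → ℝ) (hlam : ∀ i, lam i = Δ i * Q i i) :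
    α 0 = lam 0
    ∧ α 0 = 2 * (β1 - β0) / (β0 * (c0 ^ 2 + c1 ^ 2))
    ∧ α 1 = 2 * (β2 - β0) / (β0 * (c1 ^ 2 + c2 ^ 2))
    ∧ lam 1 = 2 * (β2 - β0) / (β0 * (c0 ^ 2 + c2 ^ 2))
    ∧ (β0 < β2 → (α 1 = lam 1 ↔ c0 = c1)) := by
  have hRinv : R⁻¹ = !![1, 0; 1, 1] := by
    apply Matrix.inv_eq_right_inv
    ext i j
    fin_cases i <;> fin_cases j <;>
      norm_num [hR, Matrix.mul_apply, Fin.sum_univ_two]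
  have hd0 : (0:ℝ) < β0 * (c0 ^ 2 + c1 ^ 2) := by positivity
  have hd1 : (0:ℝ) < β0 * (c1 ^ 2 + c2 ^ 2) := by positivity
  have hd2 : (0:ℝ) < β0 * (c0 ^ 2 + c2 ^ 2) := by positivity
  have hdiaginv : (Matrix.diagonal fun i => S i i)⁻¹
      = Matrix.diagonal ![(β0 * (c0 ^ 2 + c1 ^ 2))⁻¹, (β0 * (c1 ^ 2 + c2 ^ 2))⁻¹] := by
    apply Matrix.inv_eq_right_inv
    ext i j
    fin_cases i <;> fin_cases j <;>
      simp [hS, Matrix.mul_apply, Fin.sum_univ_two, Matrix.diagonal] <;>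
      field_simp <;> ring
  have hα0 : α 0 = 2 * (β1 - β0) / (β0 * (c0 ^ 2 + c1 ^ 2)) := by
    subst hα
    rw [hdiaginv, hRinv]
    simp [hR, hS, hμ, Matrix.mulVec, Matrix.mul_apply, Fin.sum_univ_two,
      dotProduct, Matrix.diagonal]
    field_simp
    ring
  have hα1 : α 1 = 2 * (β2 - β0) / (β0 * (c1 ^ 2 + c2 ^ 2)) := by
    subst hα
    rw [hdiaginv, hRinv]
    simp [hR, hS, hμ, Matrix.mulVec, Matrix.mul_apply, Fin.sum_univ_two,
      dotProduct, Matrix.diagonal]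
    field_simp
    ring
  have hQ' : Q = !![1, 0; 1, 1] := by rw [hQ, hRinv]
  have hlam0 : lam 0 = 2 * (β1 - β0) / (β0 * (c0 ^ 2 + c1 ^ 2)) := by
    rw [hlam, hΔ]
    simp [hv, hQ', hS, hμ, Matrix.mulVec, dotProduct, Fin.sum_univ_two]
    ring_nf
  have hlam1 : lam 1 = 2 * (β2 - β0) / (β0 * (c0 ^ 2 + c2 ^ 2)) := by
    rw [hlam, hΔ]
    simp [hv, hQ', hS, hμ, Matrix.mulVec, dotProduct, Fin.sum_univ_two]
    ring_nf
  refine ⟨hα0.trans hlam0.symm, hα0, hα1, hlam1, fun hlt => ?_⟩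
  rw [hα1, hlam1]
  constructor
  · intro h
    field_simp at h
    have h3 : (β2 - β0) * (c0 ^ 2 - c1 ^ 2) = 0 := by linarith
    rcases mul_eq_zero.mp h3 with h4 | h4
    · linarith
    · exact (sq_eq_sq₀ hc0.le hc1.le).mp (by linarith)
  · intro h
    rw [h]
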